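/- arXiv:2303.10322 — 3 statements merged into one kernel-verified Lean document; each statement's English description precedes it below -/
import Mathlib

section
/- Consider real matrices with the following data: a positive semidefinite symmetric matrix Σ ∈ ℝ^{n_x×n_x} with Σ ⪯ σ̄I, a matrix H ∈ ℝ^{n_y×n_x} with ‖H‖ ≤ h̄, a matrix U^y ∈ ℝ^{n_y×n_y} with ‖U^y‖ ≤ β̄, a matrix U^{xy} ∈ ℝ^{n_x×n_x} with ‖U^{xy}‖ ≤ γ̄, and a symmetric matrix R̂ ∈ ℝ^{n_y×n_y} with R̂ ⪰ r̂I for some r̂ > 0. Define Σ^y = U^y H Σ Hᵀ (U^y)ᵀ + R̂ and K = Σ U^{xy} Hᵀ (U^y)ᵀ (Σ^y)^{-1}. If the constants satisfy the strict inequality σ̄ γ̄ h̄² β̄² < r̂, then the matrix I_{n_x} − K U^y H is invertible. -/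
open Matrix
open scoped Matrix.Norms.L2Operator

private lemma conjT_eq_transpose {m n : ℕ} (A : Matrix (Fin m) (Fin n) ℝ) : Aᴴ = Aᵀ := by
  ext i j; simp [Matrix.conjTranspose]

private lemma euclid_norm_sq_dot {n : ℕ} (x : EuclideanSpace ℝ (Fin n)) :
    ‖x‖ ^ 2 = (WithLp.equiv _ _ x) ⬝ᵥ (WithLp.equiv _ _ x) := by
  rw [← real_inner_self_eq_norm_sq, PiLp.inner_apply]
  simp only [RCLike.inner_apply, conj_trivial, dotProduct]
  rfl

private lemma euclid_inner_dot {n : ℕ} (x y : EuclideanSpace ℝ (Fin n)) :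
    (inner ℝ x y : ℝ) = (WithLp.equiv _ _ x) ⬝ᵥ (WithLp.equiv _ _ y) := by
  simp [PiLp.inner_apply, dotProduct]
  exact Finset.sum_congr rfl fun _ _ => mul_comm _ _

private lemma l2_opNorm_le_of_mulVec {m n : ℕ} (A : Matrix (Fin m) (Fin n) ℝ) {c : ℝ}
    (hc : 0 ≤ c)
    (h : ∀ x : EuclideanSpace ℝ (Fin n),
      ‖(EuclideanSpace.equiv (Fin m) ℝ).symm (A *ᵥ (WithLp.equiv _ _ x))‖ ≤ c * ‖x‖) :
    ‖A‖ ≤ c := by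
  rw [Matrix.l2_opNorm_def]
  exact ContinuousLinearMap.opNorm_le_bound _ hc fun x => h x

open scoped MatrixOrder in
private lemma norm_le_of_posSemidef_le {n : ℕ} {A : Matrix (Fin n) (Fin n) ℝ} {c : ℝ}
    (hA : A.PosSemidef) (hc : 0 ≤ c)
    (hub : ((c • (1 : Matrix (Fin n) (Fin n) ℝ)) - A).PosSemidef) : ‖A‖ ≤ c := by
  have hq : ∀ x : Fin n → ℝ, x ⬝ᵥ (A *ᵥ x) ≤ c * (x ⬝ᵥ x) := by
    intro x
    have h0 := hub.dotProduct_mulVec_nonneg x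
    simp only [star_trivial, Matrix.sub_mulVec, dotProduct_sub, Matrix.smul_mulVec,
      Matrix.one_mulVec, dotProduct_smul, smul_eq_mul, sub_nonneg] at h0
    exact h0
  set S := CFC.sqrt A with hSdef
  have hSS : S * S = A := CFC.sqrt_mul_sqrt_self A (nonneg_iff_posSemidef.mpr hA)
  have hSherm : Sᴴ = S := (nonneg_iff_posSemidef.mp (CFC.sqrt_nonneg A)).isHermitian
  have hST : Sᵀ = S := by rw [← conjT_eq_transpose, hSherm]
  have hnormA : ‖A‖ = ‖S‖ * ‖S‖ := by
    rw [← Matrix.l2_opNorm_conjTranspose_mul_self S, hSherm, hSS]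
  have hSnorm : ‖S‖ ≤ Real.sqrt c := by
    apply l2_opNorm_le_of_mulVec _ (Real.sqrt_nonneg c)
    intro x
    set v : Fin n → ℝ := WithLp.equiv _ _ x with hv
    have key : v ⬝ᵥ (A *ᵥ v) = (S *ᵥ v) ⬝ᵥ (S *ᵥ v) := by
      rw [← hSS, ← Matrix.mulVec_mulVec, Matrix.dotProduct_mulVec, ← Matrix.mulVec_transpose, hST]
    have hsq : ‖(EuclideanSpace.equiv (Fin n) ℝ).symm (S *ᵥ v)‖ ^ 2 ≤ c * ‖x‖ ^ 2 := by
      rw [euclid_norm_sq_dot, euclid_norm_sq_dot]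
      have hdot : (WithLp.equiv _ _ ((EuclideanSpace.equiv (Fin n) ℝ).symm (S *ᵥ v)))
          = S *ᵥ v := rfl
      rw [hdot, ← hv, ← key]
      exact hq v
    calc ‖(EuclideanSpace.equiv (Fin n) ℝ).symm (S *ᵥ v)‖
        = Real.sqrt (‖(EuclideanSpace.equiv (Fin n) ℝ).symm (S *ᵥ v)‖ ^ 2) :=
          (Real.sqrt_sq (norm_nonneg _)).symm
      _ ≤ Real.sqrt (c * ‖x‖ ^ 2) := Real.sqrt_le_sqrt hsq
      _ = Real.sqrt c * ‖x‖ := by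
          rw [Real.sqrt_mul hc, Real.sqrt_sq (norm_nonneg _)]
  calc ‖A‖ = ‖S‖ * ‖S‖ := hnormA
    _ ≤ Real.sqrt c * Real.sqrt c :=
        mul_le_mul hSnorm hSnorm (norm_nonneg _) (Real.sqrt_nonneg _)
    _ = c := Real.mul_self_sqrt hc

private lemma norm_inv_le_of_lb {n : ℕ} {B : Matrix (Fin n) (Fin n) ℝ} {r : ℝ} (hr : 0 < r)
    (hlb : ∀ y : Fin n → ℝ, r * (y ⬝ᵥ y) ≤ y ⬝ᵥ (B *ᵥ y))
    (hBinv : B * B⁻¹ = 1) : ‖B⁻¹‖ ≤ r⁻¹ := by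
  apply l2_opNorm_le_of_mulVec _ (by positivity)
  intro x
  set v : Fin n → ℝ := WithLp.equiv _ _ x with hv
  set Y : EuclideanSpace ℝ (Fin n) := (EuclideanSpace.equiv (Fin n) ℝ).symm (B⁻¹ *ᵥ v) with hY
  have hYv : (WithLp.equiv _ _ Y) = B⁻¹ *ᵥ v := rfl
  have h1 : r * ‖Y‖ ^ 2 ≤ (inner ℝ Y x : ℝ) := by
    rw [euclid_norm_sq_dot, euclid_inner_dot, hYv, ← hv]
    calc r * ((B⁻¹ *ᵥ v) ⬝ᵥ (B⁻¹ *ᵥ v)) ≤ (B⁻¹ *ᵥ v) ⬝ᵥ (B *ᵥ (B⁻¹ *ᵥ v)) := hlb _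
      _ = (B⁻¹ *ᵥ v) ⬝ᵥ v := by rw [Matrix.mulVec_mulVec, hBinv, Matrix.one_mulVec]
  have h2 : (inner ℝ Y x : ℝ) ≤ ‖Y‖ * ‖x‖ := real_inner_le_norm Y x
  have h3 : r * ‖Y‖ ^ 2 ≤ ‖Y‖ * ‖x‖ := le_trans h1 h2
  rcases (norm_nonneg Y).eq_or_lt with h | h
  · rw [← h]; positivity
  · rw [inv_mul_eq_div, le_div_iff₀ hr]
    nlinarith [h3, h]

/-- **Invertibility of `I − K Uʸ H` in the CKF stability analysis (condition C3).**
Given a positive semidefinite `Σ ⪯ σ̄•I`, matrices `H, Uy, Uxy` with spectral-norm bounds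
`‖H‖ ≤ h̄`, `‖Uy‖ ≤ β̄`, `‖Uxy‖ ≤ γ̄`, a symmetric `R̂ ⪰ r̂•I` with `r̂ > 0`,
the innovation covariance `Σy = Uy H Σ Hᵀ Uyᵀ + R̂` and gain `K = Σ Uxy Hᵀ Uyᵀ (Σy)⁻¹`:
if `σ̄ γ̄ h̄² β̄² < r̂`, then `I − K Uy H` is invertible. -/
theorem ckf_I_sub_KUH_invertible {nx ny : ℕ}
    (Sig : Matrix (Fin nx) (Fin nx) ℝ) (H : Matrix (Fin ny) (Fin nx) ℝ)
    (Uy : Matrix (Fin ny) (Fin ny) ℝ) (Uxy : Matrix (Fin nx) (Fin nx) ℝ)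
    (Rhat : Matrix (Fin ny) (Fin ny) ℝ)
    (sigbar hbar betabar gambar rhat : ℝ) (hrhat : 0 < rhat)
    (hSig : Sig.PosSemidef)
    (hSigub : ((sigbar • (1 : Matrix (Fin nx) (Fin nx) ℝ)) - Sig).PosSemidef)
    (hH : ‖H‖ ≤ hbar) (hUy : ‖Uy‖ ≤ betabar) (hUxy : ‖Uxy‖ ≤ gambar)
    (hRhatsymm : Rhat.IsHermitian)
    (hRhatlb : (Rhat - (rhat • (1 : Matrix (Fin ny) (Fin ny) ℝ))).PosSemidef)
    (Sigy : Matrix (Fin ny) (Fin ny) ℝ) (K : Matrix (Fin nx) (Fin ny) ℝ)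
    (hSigy : Sigy = Uy * H * Sig * Hᵀ * Uyᵀ + Rhat)
    (hK : K = Sig * Uxy * Hᵀ * Uyᵀ * Sigy⁻¹)
    (hC3 : sigbar * gambar * hbar ^ 2 * betabar ^ 2 < rhat) :
    IsUnit ((1 : Matrix (Fin nx) (Fin nx) ℝ) - K * Uy * H) := by
  rcases Nat.eq_zero_or_pos nx with h0 | hpos
  · subst h0
    exact isUnit_of_subsingleton _
  -- nonnegativity of the bounds
  have hbnn : 0 ≤ hbar := le_trans (norm_nonneg _) hH
  have hbetann : 0 ≤ betabar := le_trans (norm_nonneg _) hUy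
  have hgamnn : 0 ≤ gambar := le_trans (norm_nonneg _) hUxy
  have hsignn : 0 ≤ sigbar := by
    set e : Fin nx → ℝ := Pi.single ⟨0, hpos⟩ 1 with he
    have hee : e ⬝ᵥ e = 1 := by
      simp [he, dotProduct, Pi.single_apply]
    have h1 := hSigub.dotProduct_mulVec_nonneg e
    have h2 := hSig.dotProduct_mulVec_nonneg e
    simp only [star_trivial, Matrix.sub_mulVec, dotProduct_sub, Matrix.smul_mulVec,
      Matrix.one_mulVec, dotProduct_smul, smul_eq_mul, sub_nonneg, hee, mul_one] at h1 h2
    linarith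
  -- norm bound on Sig
  have hSignorm : ‖Sig‖ ≤ sigbar := norm_le_of_posSemidef_le hSig hsignn hSigub
  -- the PSD part of Sigy
  have hform : Uy * H * Sig * Hᵀ * Uyᵀ = (Uy * H) * Sig * (Uy * H)ᴴ := by
    rw [conjT_eq_transpose, Matrix.transpose_mul, ← Matrix.mul_assoc]
  have hM : ((Uy * H) * Sig * (Uy * H)ᴴ).PosSemidef := hSig.mul_mul_conjTranspose_same (Uy * H)
  -- quadratic lower bound for Sigy
  have hSy_lb : ∀ y : Fin ny → ℝ, rhat * (y ⬝ᵥ y) ≤ y ⬝ᵥ (Sigy *ᵥ y) := by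
    intro y
    have h1 := hM.dotProduct_mulVec_nonneg y
    have h2 := hRhatlb.dotProduct_mulVec_nonneg y
    simp only [star_trivial, Matrix.sub_mulVec, dotProduct_sub, Matrix.smul_mulVec,
      Matrix.one_mulVec, dotProduct_smul, smul_eq_mul, sub_nonneg] at h1 h2
    have : y ⬝ᵥ (Sigy *ᵥ y)
        = y ⬝ᵥ (((Uy * H) * Sig * (Uy * H)ᴴ) *ᵥ y) + y ⬝ᵥ (Rhat *ᵥ y) := by
      rw [hSigy, hform, Matrix.add_mulVec, dotProduct_add]
    linarith
  -- Sigy is positive definite, hence invertible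
  have hSyPD : Sigy.PosDef := by
    refine Matrix.PosDef.of_dotProduct_mulVec_pos ?_ ?_
    · rw [hSigy, hform]
      exact hM.isHermitian.add hRhatsymm
    · intro y hy
      have hnn : 0 ≤ y ⬝ᵥ y := Finset.sum_nonneg fun i _ => mul_self_nonneg _
      have hne : y ⬝ᵥ y ≠ 0 := fun h => hy (dotProduct_self_eq_zero.mp h)
      have hypos : 0 < y ⬝ᵥ y := lt_of_le_of_ne hnn (Ne.symm hne)
      simp only [star_trivial]
      exact lt_of_lt_of_le (by positivity) (hSy_lb y)
  have hdet : Sigy * Sigy⁻¹ = 1 := Matrix.mul_nonsing_inv _ hSyPD.det_pos.ne'.isUnit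
  have hSyinv : ‖Sigy⁻¹‖ ≤ rhat⁻¹ := norm_inv_le_of_lb hrhat hSy_lb hdet
  have hHT : ‖Hᵀ‖ ≤ hbar := by
    rw [← conjT_eq_transpose, Matrix.l2_opNorm_conjTranspose]; exact hH
  have hUyT : ‖Uyᵀ‖ ≤ betabar := by
    rw [← conjT_eq_transpose, Matrix.l2_opNorm_conjTranspose]; exact hUy
  have n1 : ‖Sig * Uxy‖ ≤ sigbar * gambar :=
    le_trans (Matrix.l2_opNorm_mul _ _)
      (mul_le_mul hSignorm hUxy (norm_nonneg _) hsignn)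
  have n2 : ‖Sig * Uxy * Hᵀ‖ ≤ sigbar * gambar * hbar :=
    le_trans (Matrix.l2_opNorm_mul _ _)
      (mul_le_mul n1 hHT (norm_nonneg _) (by positivity))
  have n3 : ‖Sig * Uxy * Hᵀ * Uyᵀ‖ ≤ sigbar * gambar * hbar * betabar :=
    le_trans (Matrix.l2_opNorm_mul _ _)
      (mul_le_mul n2 hUyT (norm_nonneg _) (by positivity))
  have n4 : ‖K‖ ≤ sigbar * gambar * hbar * betabar * rhat⁻¹ := by
    rw [hK]
    exact le_trans (Matrix.l2_opNorm_mul _ _)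
      (mul_le_mul n3 hSyinv (norm_nonneg _) (by positivity))
  have n5 : ‖K * Uy‖ ≤ sigbar * gambar * hbar * betabar * rhat⁻¹ * betabar :=
    le_trans (Matrix.l2_opNorm_mul _ _)
      (mul_le_mul n4 hUy (norm_nonneg _) (by positivity))
  have n6 : ‖K * Uy * H‖ ≤ sigbar * gambar * hbar * betabar * rhat⁻¹ * betabar * hbar :=
    le_trans (Matrix.l2_opNorm_mul _ _)
      (mul_le_mul n5 hH (norm_nonneg _) (by positivity))
  have hbd : sigbar * gambar * hbar * betabar * rhat⁻¹ * betabar * hbar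
      = (sigbar * gambar * hbar ^ 2 * betabar ^ 2) / rhat := by
    field_simp
  have hlt : ‖K * Uy * H‖ < 1 := by
    refine lt_of_le_of_lt n6 ?_
    rw [hbd]
    exact (div_lt_one hrhat).mpr hC3
  exact ⟨Units.oneSub _ hlt, rfl⟩
end

section
/- Let Σ ∈ ℝ^{n×n} be a symmetric positive definite matrix with Σ ⪯ σ̄I, let A ∈ ℝ^{n×n} be invertible with ‖A‖ ≤ ā for some ā > 0, and let Q̂ ∈ ℝ^{n×n} be a symmetric matrix with Q̂ ⪰ q̂I for some q̂ > 0. Then the Loewner-order inequality Aᵀ (A Σ Aᵀ + Q̂)^{-1} A ⪯ (1 + q̂/(ā² σ̄))^{-1} Σ^{-1} holds; in particular the contraction factor (1 + q̂/(ā²σ̄))^{-1} is strictly less than 1. -/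
open Matrix
open scoped Matrix.Norms.L2Operator

namespace RiccatiAux
variable {n : ℕ}
open scoped MatrixOrder

lemma cT_eq (A : Matrix (Fin n) (Fin n) ℝ) : Aᴴ = Aᵀ := by
  ext i j; simp [conjTranspose_apply]

lemma smul_psd {c : ℝ} (hc : 0 ≤ c) {M : Matrix (Fin n) (Fin n) ℝ} (hM : M.PosSemidef) :
    (c • M).PosSemidef := by
  refine PosSemidef.of_dotProduct_mulVec_nonneg ?_ (fun x => ?_)
  · unfold Matrix.IsHermitian
    rw [cT_eq, transpose_smul, ← cT_eq, hM.1]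
  · rw [smul_mulVec, dotProduct_smul]
    exact mul_nonneg hc (by simpa using hM.dotProduct_mulVec_nonneg x)

lemma smul_pd {c : ℝ} (hc : 0 < c) {M : Matrix (Fin n) (Fin n) ℝ} (hM : M.PosDef) :
    (c • M).PosDef := by
  refine PosDef.of_dotProduct_mulVec_pos (smul_psd hc.le hM.posSemidef).1 (fun x hx => ?_)
  rw [smul_mulVec, dotProduct_smul]
  exact mul_pos hc (by simpa using hM.dotProduct_mulVec_pos hx)

lemma conj_pd {N B : Matrix (Fin n) (Fin n) ℝ} (hN : N.PosDef) (hB : IsUnit B) :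
    (Bᵀ * N * B).PosDef := by
  refine PosDef.of_dotProduct_mulVec_pos ?_ (fun x hx => ?_)
  · unfold Matrix.IsHermitian
    rw [cT_eq]
    simp [Matrix.transpose_mul, Matrix.mul_assoc, hN.isHermitian.eq.symm ▸ (rfl : Nᵀ = Nᵀ)]
    rw [← cT_eq N, hN.isHermitian.eq]
  · have hBx : B *ᵥ x ≠ 0 := fun h => hx (by
      have := congrArg (fun v => B⁻¹ *ᵥ v) h
      simpa [Matrix.mulVec_mulVec, Matrix.nonsing_inv_mul B ((Matrix.isUnit_iff_isUnit_det B).mp hB)] using this)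
    have key : x ⬝ᵥ (Bᵀ * N * B) *ᵥ x = (B *ᵥ x) ⬝ᵥ N *ᵥ (B *ᵥ x) := by
      rw [← Matrix.mulVec_mulVec, ← Matrix.mulVec_mulVec, Matrix.dotProduct_mulVec,
        Matrix.vecMul_transpose]
    simpa [key] using hN.dotProduct_mulVec_pos hBx

variable {n : ℕ}


lemma dot_self_eq_norm_sq (x : Fin n → ℝ) :
    x ⬝ᵥ x = ‖(EuclideanSpace.equiv (Fin n) ℝ).symm x‖ ^ 2 := by
  rw [EuclideanSpace.norm_eq, Real.sq_sqrt (by positivity)]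
  simp [dotProduct, Real.norm_eq_abs, sq_abs, pow_two]

lemma aat_bound (A : Matrix (Fin n) (Fin n) ℝ) {a : ℝ} (ha : 0 ≤ a) (hA : ‖A‖ ≤ a) :
    ((a ^ 2) • (1 : Matrix (Fin n) (Fin n) ℝ) - A * Aᵀ).PosSemidef := by
  refine PosSemidef.of_dotProduct_mulVec_nonneg ?_ (fun x => ?_)
  · have h2 : (A * Aᵀ).IsHermitian := by
      rw [← cT_eq]; exact (Matrix.posSemidef_self_mul_conjTranspose A).1
    have h1 : ((a ^ 2) • (1 : Matrix (Fin n) (Fin n) ℝ)).IsHermitian := by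
      unfold Matrix.IsHermitian
      rw [cT_eq, transpose_smul, transpose_one]
    exact h1.sub h2
  · have hAt : ‖Aᵀ‖ ≤ a := by
      rw [← cT_eq, Matrix.l2_opNorm_conjTranspose]; exact hA
    have key : (star x) ⬝ᵥ ((a ^ 2) • (1 : Matrix (Fin n) (Fin n) ℝ) - A * Aᵀ) *ᵥ x
        = a ^ 2 * (x ⬝ᵥ x) - (Aᵀ *ᵥ x) ⬝ᵥ (Aᵀ *ᵥ x) := by
      rw [star_trivial, Matrix.sub_mulVec, dotProduct_sub, smul_mulVec,
        dotProduct_smul, one_mulVec, ← Matrix.mulVec_mulVec, Matrix.dotProduct_mulVec,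
        Matrix.mulVec_transpose, smul_eq_mul]
    rw [key, sub_nonneg, dot_self_eq_norm_sq, dot_self_eq_norm_sq]
    have h1 : ‖(EuclideanSpace.equiv (Fin n) ℝ).symm (Aᵀ *ᵥ x)‖
        ≤ a * ‖(EuclideanSpace.equiv (Fin n) ℝ).symm x‖ := by
      calc ‖(EuclideanSpace.equiv (Fin n) ℝ).symm (Aᵀ *ᵥ x)‖
          ≤ ‖Aᵀ‖ * ‖(EuclideanSpace.equiv (Fin n) ℝ).symm x‖ :=
            Matrix.l2_opNorm_mulVec Aᵀ ((EuclideanSpace.equiv (Fin n) ℝ).symm x)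
        _ ≤ a * ‖(EuclideanSpace.equiv (Fin n) ℝ).symm x‖ := by
            apply mul_le_mul_of_nonneg_right hAt (norm_nonneg _)
    calc ‖(EuclideanSpace.equiv (Fin n) ℝ).symm (Aᵀ *ᵥ x)‖ ^ 2
        ≤ (a * ‖(EuclideanSpace.equiv (Fin n) ℝ).symm x‖) ^ 2 := by
          apply pow_le_pow_left₀ (norm_nonneg _) h1
      _ = a ^ 2 * ‖(EuclideanSpace.equiv (Fin n) ℝ).symm x‖ ^ 2 := by ring

variable {n : ℕ}


lemma sqrt_isUnit {M : Matrix (Fin n) (Fin n) ℝ} (hM : M.PosDef) :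
    IsUnit (CFC.sqrt M) := by
  rw [Matrix.isUnit_iff_isUnit_det, isUnit_iff_ne_zero]
  intro h
  have := CFC.sqrt_mul_sqrt_self M hM.posSemidef.nonneg
  have hdet : M.det = (CFC.sqrt M).det * (CFC.sqrt M).det := by
    rw [← Matrix.det_mul, this]
  rw [h, mul_zero] at hdet
  exact (ne_of_gt hM.det_pos) hdet

/-- If `C` is positive definite and `1 - C` is PSD then `C⁻¹ - 1` is PSD. -/
lemma inv_sub_one_psd {C : Matrix (Fin n) (Fin n) ℝ} (hC : C.PosDef)
    (h : ((1 : Matrix (Fin n) (Fin n) ℝ) - C).PosSemidef) :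
    (C⁻¹ - (1 : Matrix (Fin n) (Fin n) ℝ)).PosSemidef := by
  have hCi : C⁻¹.PosDef := hC.inv
  set R := CFC.sqrt C⁻¹ with hR
  have hRps : R.PosSemidef := (CFC.sqrt_nonneg C⁻¹).posSemidef
  have hRsq : R * R = C⁻¹ := CFC.sqrt_mul_sqrt_self C⁻¹ hCi.posSemidef.nonneg
  have hRu : IsUnit R := sqrt_isUnit hCi
  have hRdet : IsUnit R.det := (Matrix.isUnit_iff_isUnit_det R).mp hRu
  have hCdet : IsUnit C.det := (Matrix.isUnit_iff_isUnit_det C).mp hC.isUnit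
  have hCinvinv : C = (R * R)⁻¹ := by
    rw [hRsq, Matrix.nonsing_inv_nonsing_inv C hCdet]
  have hRCR : R * C * R = 1 := by
    rw [hCinvinv, Matrix.mul_inv_rev, ← Matrix.mul_assoc, Matrix.mul_assoc (R * R⁻¹),
      Matrix.mul_nonsing_inv R hRdet, Matrix.nonsing_inv_mul R hRdet, Matrix.one_mul]
  have key : R * ((1 : Matrix (Fin n) (Fin n) ℝ) - C) * R = C⁻¹ - 1 := by
    rw [Matrix.mul_sub, Matrix.mul_one, Matrix.sub_mul, hRsq, hRCR]
  have hthis := h.conjTranspose_mul_mul_same R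
  have hRt : Rᴴ = R := hRps.isHermitian
  rw [hRt, key] at hthis
  exact hthis

/-- Loewner antitonicity of the inverse. -/
lemma inv_antitone {M N : Matrix (Fin n) (Fin n) ℝ} (hM : M.PosDef) (hN : N.PosDef)
    (h : (M - N).PosSemidef) : (N⁻¹ - M⁻¹).PosSemidef := by
  set T := CFC.sqrt M with hT
  have hTps : T.PosSemidef := (CFC.sqrt_nonneg M).posSemidef
  have hTsq : T * T = M := CFC.sqrt_mul_sqrt_self M hM.posSemidef.nonneg
  have hTu : IsUnit T := sqrt_isUnit hM
  have hTdet : IsUnit T.det := (Matrix.isUnit_iff_isUnit_det T).mp hTu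
  have hTidet : IsUnit T⁻¹.det := by
    rw [Matrix.det_nonsing_inv, Ring.inverse_eq_inv, isUnit_iff_ne_zero]
    exact inv_ne_zero (isUnit_iff_ne_zero.mp hTdet)
  have hTit : (T⁻¹)ᴴ = T⁻¹ := hTps.isHermitian.inv
  -- C := T⁻¹ * N * T⁻¹
  set C := T⁻¹ * N * T⁻¹ with hCdef
  have hC : C.PosDef := by
    have := conj_pd hN ((Matrix.isUnit_iff_isUnit_det _).mpr hTidet)
    have hTt : (T⁻¹)ᵀ = T⁻¹ := by rw [← cT_eq]; exact hTit
    rwa [hTt] at this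
  have hone : ((1 : Matrix (Fin n) (Fin n) ℝ) - C).PosSemidef := by
    have hconj := h.conjTranspose_mul_mul_same T⁻¹
    rw [hTit] at hconj
    have : T⁻¹ * (M - N) * T⁻¹ = 1 - C := by
      rw [Matrix.mul_sub, Matrix.sub_mul, hCdef, ← hTsq, ← Matrix.mul_assoc,
        Matrix.nonsing_inv_mul T hTdet, Matrix.one_mul, Matrix.mul_nonsing_inv T hTdet]
    rwa [this] at hconj
  have hCinv := inv_sub_one_psd hC hone
  have hCi : C⁻¹ = T * N⁻¹ * T := by
    rw [hCdef, Matrix.mul_inv_rev, Matrix.mul_inv_rev,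
      Matrix.nonsing_inv_nonsing_inv T hTdet, Matrix.mul_assoc]
  have hfin := hCinv.conjTranspose_mul_mul_same T⁻¹
  rw [hTit] at hfin
  have : T⁻¹ * (C⁻¹ - 1) * T⁻¹ = N⁻¹ - M⁻¹ := by
    rw [Matrix.mul_sub, Matrix.sub_mul, Matrix.mul_one, hCi, ← Matrix.mul_assoc,
      ← Matrix.mul_assoc, Matrix.nonsing_inv_mul T hTdet, Matrix.one_mul,
      Matrix.mul_assoc, Matrix.mul_nonsing_inv T hTdet, Matrix.mul_one]
    congr 1
    rw [← Matrix.mul_inv_rev, hTsq]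
  rwa [this] at hfin

end RiccatiAux

/-- **Riccati-type contraction inequality.**
Let `Σ` (here `Sig`) be symmetric positive definite with `Σ ⪯ σ̄•I`, let `A` be invertible with
`‖A‖ ≤ ā` for some `ā > 0`, and let `Q̂` be symmetric with `Q̂ ⪰ q̂•I` for some `q̂ > 0`. Then
`Aᵀ (A Σ Aᵀ + Q̂)⁻¹ A ⪯ (1 + q̂/(ā² σ̄))⁻¹ • Σ⁻¹` in the Loewner order; in particular the
contraction factor `(1 + q̂/(ā² σ̄))⁻¹` is strictly less than `1`. -/
theorem riccati_contraction {n : ℕ} (hn : 0 < n)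
    (Sig A Qhat : Matrix (Fin n) (Fin n) ℝ)
    (sigbar abar qhat : ℝ) (habar : 0 < abar) (hqhat : 0 < qhat)
    (hSig : Sig.PosDef)
    (hSigub : ((sigbar • (1 : Matrix (Fin n) (Fin n) ℝ)) - Sig).PosSemidef)
    (hAunit : IsUnit A) (hA : ‖A‖ ≤ abar)
    (hQhatsymm : Qhat.IsHermitian)
    (hQhatlb : (Qhat - (qhat • (1 : Matrix (Fin n) (Fin n) ℝ))).PosSemidef) :
    ((1 + qhat / (abar ^ 2 * sigbar))⁻¹ • Sig⁻¹ - Aᵀ * (A * Sig * Aᵀ + Qhat)⁻¹ * A).PosSemidef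
      ∧ (1 + qhat / (abar ^ 2 * sigbar))⁻¹ < 1 := by
  classical
  obtain ⟨i0⟩ : Nonempty (Fin n) := ⟨⟨0, hn⟩⟩
  -- σ̄ > 0
  have hx1 : (fun _ : Fin n => (1 : ℝ)) ≠ 0 := by
    intro h
    have := congrFun h i0
    simpa using this
  have hspos := hSig.dotProduct_mulVec_pos hx1
  have hub := hSigub.dotProduct_mulVec_nonneg (fun _ => (1 : ℝ))
  rw [star_trivial, Matrix.sub_mulVec, dotProduct_sub, smul_mulVec, dotProduct_smul,
    one_mulVec, smul_eq_mul, sub_nonneg] at hub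
  rw [star_trivial] at hspos
  have hdot : (fun _ : Fin n => (1 : ℝ)) ⬝ᵥ (fun _ => (1 : ℝ)) = (n : ℝ) := by
    simp [dotProduct]
  have hsig : 0 < sigbar := by
    rw [hdot] at hub
    have hnpos : (0 : ℝ) < (n : ℝ) := by exact_mod_cast hn
    nlinarith
  have hden : 0 < abar ^ 2 * sigbar := by positivity
  set q : ℝ := qhat / (abar ^ 2 * sigbar) with hqdef
  have hqpos : 0 < q := by positivity
  have hc1 : (1 : ℝ) < 1 + q := by linarith
  have hcpos : (0 : ℝ) < 1 + q := by linarith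
  refine ⟨?_, inv_lt_one_of_one_lt₀ hc1⟩
  -- S2 := A Σ Aᵀ positive definite
  have hAdet : IsUnit A.det := (Matrix.isUnit_iff_isUnit_det A).mp hAunit
  have hAtu : IsUnit Aᵀ := by
    rw [Matrix.isUnit_iff_isUnit_det, Matrix.det_transpose]
    exact hAdet
  have hAtdet : IsUnit Aᵀ.det := (Matrix.isUnit_iff_isUnit_det Aᵀ).mp hAtu
  set S2 : Matrix (Fin n) (Fin n) ℝ := A * Sig * Aᵀ with hS2def
  have hS2 : S2.PosDef := by
    have := RiccatiAux.conj_pd hSig hAtu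
    rwa [Matrix.transpose_transpose] at this
  -- bound: (ā²σ̄) • 1 - S2 ⪰ 0
  have hpsd1 : (A * ((sigbar • (1 : Matrix (Fin n) (Fin n) ℝ)) - Sig) * Aᵀ).PosSemidef := by
    have := hSigub.mul_mul_conjTranspose_same A
    rwa [RiccatiAux.cT_eq] at this
  have hpsd2 : (sigbar • ((abar ^ 2) • (1 : Matrix (Fin n) (Fin n) ℝ) - A * Aᵀ)).PosSemidef :=
    RiccatiAux.smul_psd hsig.le (RiccatiAux.aat_bound A habar.le hA)
  have hbound : ((abar ^ 2 * sigbar) • (1 : Matrix (Fin n) (Fin n) ℝ) - S2).PosSemidef := by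
    have hsum := hpsd1.add hpsd2
    have heq : A * ((sigbar • (1 : Matrix (Fin n) (Fin n) ℝ)) - Sig) * Aᵀ
        + sigbar • ((abar ^ 2) • (1 : Matrix (Fin n) (Fin n) ℝ) - A * Aᵀ)
        = (abar ^ 2 * sigbar) • (1 : Matrix (Fin n) (Fin n) ℝ) - S2 := by
      rw [Matrix.mul_sub, Matrix.sub_mul, Matrix.mul_smul, Matrix.mul_one, Matrix.smul_mul,
        smul_sub, smul_smul, mul_comm sigbar (abar ^ 2), hS2def]
      abel
    rwa [heq] at hsum
  -- M := S2 + Q̂ positive definite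
  have hQpd : Qhat.PosDef := by
    have h1 : ((qhat • (1 : Matrix (Fin n) (Fin n) ℝ))).PosDef :=
      RiccatiAux.smul_pd hqhat Matrix.PosDef.one
    have := h1.add_posSemidef hQhatlb
    rwa [add_sub_cancel] at this
  have hM : (S2 + Qhat).PosDef := Matrix.PosDef.posSemidef_add hS2.posSemidef hQpd
  have hN : ((1 + q) • S2).PosDef := RiccatiAux.smul_pd hcpos hS2
  -- M ⪰ (1+q) S2
  have hqd : q * (abar ^ 2 * sigbar) = qhat := div_mul_cancel₀ _ (ne_of_gt hden)
  have hMN : ((S2 + Qhat) - (1 + q) • S2).PosSemidef := by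
    have hsum := hQhatlb.add (RiccatiAux.smul_psd hqpos.le hbound)
    have heq : (Qhat - (qhat • (1 : Matrix (Fin n) (Fin n) ℝ)))
        + q • ((abar ^ 2 * sigbar) • (1 : Matrix (Fin n) (Fin n) ℝ) - S2)
        = (S2 + Qhat) - (1 + q) • S2 := by
      rw [smul_sub, smul_smul, hqd, add_smul, one_smul]
      abel
    rwa [heq] at hsum
  have hinv := RiccatiAux.inv_antitone hM hN hMN
  -- conjugate by A
  have hfin := hinv.conjTranspose_mul_mul_same A
  rw [RiccatiAux.cT_eq] at hfin
  -- compute Aᵀ ((1+q)•S2)⁻¹ A = (1+q)⁻¹ • Σ⁻¹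
  have hS2inv : S2⁻¹ = (Aᵀ)⁻¹ * Sig⁻¹ * A⁻¹ := by
    rw [hS2def, Matrix.mul_inv_rev, Matrix.mul_inv_rev, Matrix.mul_assoc]
  have hNinv : ((1 + q) • S2)⁻¹ = (1 + q)⁻¹ • S2⁻¹ := by
    apply Matrix.inv_eq_right_inv
    rw [Matrix.smul_mul, Matrix.mul_smul, smul_smul, mul_inv_cancel₀ (ne_of_gt hcpos),
      Matrix.mul_nonsing_inv S2 ((Matrix.isUnit_iff_isUnit_det S2).mp hS2.isUnit), one_smul]
  have hAtNA : Aᵀ * ((1 + q) • S2)⁻¹ * A = (1 + q)⁻¹ • Sig⁻¹ := by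
    rw [hNinv, hS2inv, Matrix.mul_smul, Matrix.smul_mul]
    congr 1
    rw [← Matrix.mul_assoc, ← Matrix.mul_assoc, Matrix.mul_nonsing_inv Aᵀ hAtdet,
      Matrix.one_mul, Matrix.mul_assoc, Matrix.nonsing_inv_mul A hAdet, Matrix.mul_one]
  have heq2 : Aᵀ * (((1 + q) • S2)⁻¹ - (S2 + Qhat)⁻¹) * A
      = (1 + q)⁻¹ • Sig⁻¹ - Aᵀ * (S2 + Qhat)⁻¹ * A := by
    rw [Matrix.mul_sub, Matrix.sub_mul, hAtNA]
  rw [heq2] at hfin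
  exact hfin
end

section
/- Let (Ω, 𝔉, P) be a probability space with filtration (𝔉_k)_{k≥0}, and for each k ≥ 0 let x̃ ∈ ℝⁿ be an 𝔉_k-measurable random vector, A an 𝔉_k-measurable random matrix, and e an ℝⁿ-valued random vector independent of 𝔉_k with E[e] = 0 and E[e eᵀ] ⪯ c̄ I for some c̄ ≥ 0. Suppose x̃' = A x̃ + e, and suppose Σ, Σ' are symmetric positive definite (possibly random, 𝔉_k-measurable) matrices with Σ' = A Σ Aᵀ + Q̂ for a symmetric 𝔉_k-measurable Q̂ ⪰ q̂I, q̂ > 0, where almost surely A is invertible, ‖A‖ ≤ ā and Σ ⪯ σ̄I. Then almost surely E[(x̃')ᵀ (Σ')^{-1} x̃' | 𝔉_k] ≤ (1 + q̂/(ā²σ̄))^{-1} x̃ᵀ Σ^{-1} x̃ + c̄ n / q̂. -/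
open Matrix MeasureTheory ProbabilityTheory
open scoped Matrix.Norms.L2Operator


variable {n : ℕ}

lemma quad_nonneg {M : Matrix (Fin n) (Fin n) ℝ} (hM : M.PosSemidef) (x : Fin n → ℝ) :
    0 ≤ x ⬝ᵥ M *ᵥ x := by
  have := hM.dotProduct_mulVec_nonneg x
  simpa using this

lemma quad_mono {A B : Matrix (Fin n) (Fin n) ℝ} (h : (B - A).PosSemidef) (x : Fin n → ℝ) :
    x ⬝ᵥ A *ᵥ x ≤ x ⬝ᵥ B *ᵥ x := by
  have := quad_nonneg h x
  simp only [Matrix.sub_mulVec, dotProduct_sub] at this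
  linarith

lemma herm_transpose_eq {A : Matrix (Fin n) (Fin n) ℝ} (hA : A.IsHermitian) : Aᵀ = A := by
  rw [← Matrix.conjTranspose_eq_transpose_of_trivial]
  exact hA.eq

lemma transpose_inv_of_herm {A : Matrix (Fin n) (Fin n) ℝ} (hA : A.IsHermitian) :
    (A⁻¹)ᵀ = A⁻¹ := by
  rw [Matrix.transpose_nonsing_inv, herm_transpose_eq hA]

lemma quad_inv_mono {A B : Matrix (Fin n) (Fin n) ℝ} (hA : A.PosDef) (hB : B.PosDef)
    (h : (B - A).PosSemidef) (x : Fin n → ℝ) :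
    x ⬝ᵥ B⁻¹ *ᵥ x ≤ x ⬝ᵥ A⁻¹ *ᵥ x := by
  set y : Fin n → ℝ := B⁻¹ *ᵥ x with hy
  have hBy : B *ᵥ y = x := by
    rw [hy, Matrix.mulVec_mulVec, Matrix.mul_nonsing_inv _ (isUnit_iff_ne_zero.mpr hB.det_pos.ne'), Matrix.one_mulVec]
  -- x ⬝ᵥ B⁻¹ x = x ⬝ᵥ y = 2 x⬝ᵥy - y ⬝ᵥ B y
  have hyBy : y ⬝ᵥ B *ᵥ y = x ⬝ᵥ y := by rw [hBy, dotProduct_comm]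
  have h1 : x ⬝ᵥ B⁻¹ *ᵥ x = 2 * (x ⬝ᵥ y) - y ⬝ᵥ B *ᵥ y := by
    rw [hyBy, ← hy]; ring
  have h2 : y ⬝ᵥ A *ᵥ y ≤ y ⬝ᵥ B *ᵥ y := quad_mono h y
  -- 2 x⬝ᵥy - y ⬝ᵥ A y ≤ x ⬝ᵥ A⁻¹ x
  have key : 0 ≤ (y - A⁻¹ *ᵥ x) ⬝ᵥ A *ᵥ (y - A⁻¹ *ᵥ x) := quad_nonneg hA.posSemidef _
  have hAinv : A * A⁻¹ = 1 := Matrix.mul_nonsing_inv _ (isUnit_iff_ne_zero.mpr hA.det_pos.ne')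
  have hAx : A *ᵥ (A⁻¹ *ᵥ x) = x := by
    rw [Matrix.mulVec_mulVec, hAinv, Matrix.one_mulVec]
  have hsym : (A⁻¹ *ᵥ x) ⬝ᵥ A *ᵥ y = x ⬝ᵥ y := by
    rw [dotProduct_mulVec, ← Matrix.mulVec_transpose]
    rw [herm_transpose_eq hA.isHermitian, hAx]
  have hexp : (y - A⁻¹ *ᵥ x) ⬝ᵥ A *ᵥ (y - A⁻¹ *ᵥ x)
      = y ⬝ᵥ A *ᵥ y - 2 * (x ⬝ᵥ y) + x ⬝ᵥ A⁻¹ *ᵥ x := by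
    rw [Matrix.mulVec_sub, sub_dotProduct, dotProduct_sub, dotProduct_sub]
    have h3 : y ⬝ᵥ A *ᵥ (A⁻¹ *ᵥ x) = x ⬝ᵥ y := by rw [hAx, dotProduct_comm]
    have h4 : (A⁻¹ *ᵥ x) ⬝ᵥ A *ᵥ (A⁻¹ *ᵥ x) = x ⬝ᵥ A⁻¹ *ᵥ x := by
      rw [hAx, dotProduct_comm]
    rw [h3, h4, hsym]; ring
  rw [h1]
  nlinarith [hexp, key, h2]

lemma smul_one_posdef {c : ℝ} (hc : 0 < c) : ((c • (1 : Matrix (Fin n) (Fin n) ℝ))).PosDef := by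
  refine Matrix.PosDef.of_dotProduct_mulVec_pos ?_ ?_
  · unfold Matrix.IsHermitian
    rw [Matrix.conjTranspose_smul]
    simp
  · intro x hx
    have : star x ⬝ᵥ (c • (1 : Matrix (Fin n) (Fin n) ℝ)) *ᵥ x = c * (x ⬝ᵥ x) := by
      rw [Matrix.smul_mulVec, Matrix.one_mulVec, dotProduct_smul, smul_eq_mul]
      simp [star_trivial]
    rw [this]
    have hxx : 0 < x ⬝ᵥ x := by
      have : x ⬝ᵥ x = ∑ i, x i * x i := rfl
      rw [this]
      rcases Function.ne_iff.mp hx with ⟨i, hi⟩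
      exact Finset.sum_pos' (fun j _ => mul_self_nonneg _)
        ⟨i, Finset.mem_univ i, mul_self_pos.mpr hi⟩
    positivity

lemma smul_one_inv {c : ℝ} (hc : c ≠ 0) :
    ((c • (1 : Matrix (Fin n) (Fin n) ℝ)))⁻¹ = c⁻¹ • 1 := by
  apply Matrix.inv_eq_right_inv
  rw [Matrix.smul_mul, Matrix.mul_smul, one_mul, smul_smul, mul_inv_cancel₀ hc, one_smul]

lemma quad_smul_one (c : ℝ) (x : Fin n → ℝ) :
    x ⬝ᵥ ((c • (1 : Matrix (Fin n) (Fin n) ℝ)) *ᵥ x) = c * (x ⬝ᵥ x) := by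
  rw [Matrix.smul_mulVec, Matrix.one_mulVec, dotProduct_smul, smul_eq_mul]

lemma smul_inv_eq {c : ℝ} (hc : c ≠ 0) {B : Matrix (Fin n) (Fin n) ℝ} (hB : IsUnit B) :
    (c • B)⁻¹ = c⁻¹ • B⁻¹ := by
  apply Matrix.inv_eq_right_inv
  rw [Matrix.smul_mul, Matrix.mul_smul, smul_smul, mul_inv_cancel₀ hc,
    Matrix.mul_nonsing_inv _ ((Matrix.isUnit_iff_isUnit_det _).mp hB), one_smul]

lemma sum_mul_psd_nonneg {M D : Matrix (Fin n) (Fin n) ℝ} (hM : M.PosSemidef)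
    (hD : D.PosSemidef) :
    0 ≤ ∑ i, ∑ j, M i j * D i j := by
  obtain ⟨m, v, hv⟩ := Matrix.posSemidef_iff_eq_sum_vecMulVec.mp hD
  set B : Matrix (Fin m) (Fin n) ℝ := Matrix.of v with hB
  have : ∀ i j, D i j = ∑ k, B k i * B k j := by
    intro i j
    rw [hv]
    simp [B, Matrix.sum_apply, Matrix.vecMulVec_apply]
  have hrw : ∑ i, ∑ j, M i j * D i j = ∑ k, (fun i => B k i) ⬝ᵥ M *ᵥ (fun i => B k i) := by
    simp only [this, dotProduct, Matrix.mulVec, Finset.mul_sum]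
    have h1 : ∀ i : Fin n, (∑ j, ∑ k, M i j * (B k i * B k j))
        = ∑ k, ∑ j, M i j * (B k i * B k j) := fun i => Finset.sum_comm
    simp only [h1]
    rw [Finset.sum_comm]
    apply Finset.sum_congr rfl
    intro k _
    apply Finset.sum_congr rfl
    intro i _
    apply Finset.sum_congr rfl
    intro j _
    ring
  rw [hrw]
  exact Finset.sum_nonneg fun k _ => quad_nonneg hM _

lemma diag_inv_le {S : Matrix (Fin n) (Fin n) ℝ} {q : ℝ} (hq : 0 < q)
    (hpd : S.PosDef) (hlb : (S - q • 1).PosSemidef) (i : Fin n) :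
    S⁻¹ i i ≤ q⁻¹ := by
  have h1 : (Pi.single i 1 : Fin n → ℝ) ⬝ᵥ S⁻¹ *ᵥ (Pi.single i 1) = S⁻¹ i i := by
    rw [Matrix.mulVec_single, single_dotProduct]
    simp
  have h2 := quad_inv_mono (smul_one_posdef hq) hpd hlb (Pi.single i 1 : Fin n → ℝ)
  rw [h1, smul_one_inv hq.ne', quad_smul_one] at h2
  simpa using h2

lemma trace_term_bound {S C : Matrix (Fin n) (Fin n) ℝ} {cbar q : ℝ}
    (hcbar : 0 ≤ cbar) (hq : 0 < q) (hpd : S.PosDef) (hlb : (S - q • 1).PosSemidef)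
    (hC : ((cbar • (1 : Matrix (Fin n) (Fin n) ℝ)) - C).PosSemidef) :
    ∑ i, ∑ j, S⁻¹ i j * C i j ≤ cbar * n / q := by
  have hMpsd : (S⁻¹).PosSemidef := hpd.inv.posSemidef
  have h0 := sum_mul_psd_nonneg hMpsd hC
  have hsplit : ∑ i, ∑ j, S⁻¹ i j * ((cbar • (1 : Matrix (Fin n) (Fin n) ℝ)) - C) i j
      = cbar * (∑ i, S⁻¹ i i) - ∑ i, ∑ j, S⁻¹ i j * C i j := by
    simp only [Matrix.sub_apply, Matrix.smul_apply, Matrix.one_apply, smul_eq_mul,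
      mul_sub, Finset.sum_sub_distrib, Finset.mul_sum]
    congr 1
    apply Finset.sum_congr rfl
    intro i _
    rw [Finset.sum_eq_single i]
    · simp [mul_comm]
    · intro j _ hj; simp [Ne.symm hj]
    · intro h; exact absurd (Finset.mem_univ i) h
  rw [hsplit] at h0
  have hdiag : ∑ i, S⁻¹ i i ≤ n * q⁻¹ := by
    calc ∑ i, S⁻¹ i i ≤ ∑ _i : Fin n, q⁻¹ :=
          Finset.sum_le_sum fun i _ => diag_inv_le hq hpd hlb i
      _ = n * q⁻¹ := by simp [mul_comm]
  have : cbar * (∑ i, S⁻¹ i i) ≤ cbar * (n * q⁻¹) :=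
    mul_le_mul_of_nonneg_left hdiag hcbar
  rw [div_eq_mul_inv]
  nlinarith


lemma smul_posdef {c : ℝ} (hc : 0 < c) {B : Matrix (Fin n) (Fin n) ℝ} (hB : B.PosDef) :
    (c • B).PosDef := by
  refine Matrix.PosDef.of_dotProduct_mulVec_pos ?_ (fun x hx => ?_)
  · unfold Matrix.IsHermitian
    rw [Matrix.conjTranspose_smul]
    rw [hB.isHermitian.eq]
    simp
  · have : star x ⬝ᵥ (c • B) *ᵥ x = c * (star x ⬝ᵥ B *ᵥ x) := by
      rw [Matrix.smul_mulVec, dotProduct_smul, smul_eq_mul]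
    rw [this]
    exact mul_pos hc (hB.dotProduct_mulVec_pos hx)

lemma dot_sq_norm (v : Fin n → ℝ) :
    v ⬝ᵥ v = ‖(EuclideanSpace.equiv (Fin n) ℝ).symm v‖ ^ 2 := by
  rw [EuclideanSpace.norm_eq]
  rw [Real.sq_sqrt (by positivity)]
  simp [dotProduct, sq, EuclideanSpace.equiv]

lemma mulVec_sq_norm_le {A : Matrix (Fin n) (Fin n) ℝ} {a : ℝ} (hA : ‖A‖ ≤ a)
    (v : Fin n → ℝ) : (A *ᵥ v) ⬝ᵥ (A *ᵥ v) ≤ a ^ 2 * (v ⬝ᵥ v) := by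
  have h0 : (0:ℝ) ≤ a := le_trans (norm_nonneg A) hA
  have h1 := Matrix.l2_opNorm_mulVec A ((EuclideanSpace.equiv (Fin n) ℝ).symm v)
  rw [dot_sq_norm, dot_sq_norm]
  have hveq : (EuclideanSpace.equiv (Fin n) ℝ)
      ((EuclideanSpace.equiv (Fin n) ℝ).symm v) = v := by rfl
  have h2 : ‖(EuclideanSpace.equiv (Fin n) ℝ).symm (A *ᵥ v)‖
      ≤ a * ‖(EuclideanSpace.equiv (Fin n) ℝ).symm v‖ := by
    refine le_trans (le_of_eq ?_) (le_trans h1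
      (mul_le_mul_of_nonneg_right hA (norm_nonneg _)))
    congr 1
  have h3 := norm_nonneg ((EuclideanSpace.equiv (Fin n) ℝ).symm (A *ᵥ v))
  nlinarith [norm_nonneg ((EuclideanSpace.equiv (Fin n) ℝ).symm v)]

lemma mulVec_dot_mulVec (A N : Matrix (Fin n) (Fin n) ℝ) (x : Fin n → ℝ) :
    (A *ᵥ x) ⬝ᵥ (N *ᵥ x) = x ⬝ᵥ ((Aᵀ * N) *ᵥ x) := by
  rw [← Matrix.mulVec_mulVec, Matrix.dotProduct_mulVec x Aᵀ, Matrix.vecMul_transpose]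

lemma main_quad_bound {A Sig Sig' Qhat : Matrix (Fin n) (Fin n) ℝ} {qhat abar sigbar : ℝ}
    (hq : 0 < qhat) (ha : 0 < abar) (hs : 0 < sigbar)
    (hSig : Sig.PosDef) (hSig' : Sig'.PosDef)
    (hrec : Sig' = A * Sig * Aᵀ + Qhat)
    (hQlb : (Qhat - qhat • (1 : Matrix (Fin n) (Fin n) ℝ)).PosSemidef)
    (hA : IsUnit A) (hAn : ‖A‖ ≤ abar)
    (hSub : ((sigbar • (1 : Matrix (Fin n) (Fin n) ℝ)) - Sig).PosSemidef)
    (x : Fin n → ℝ) :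
    (A *ᵥ x) ⬝ᵥ Sig'⁻¹ *ᵥ (A *ᵥ x)
      ≤ (1 + qhat / (abar ^ 2 * sigbar))⁻¹ * (x ⬝ᵥ Sig⁻¹ *ᵥ x) := by
  set δ : ℝ := qhat / (abar ^ 2 * sigbar) with hδ
  have hδpos : 0 < δ := by positivity
  have hAT : Aᵀ = Aᴴ := (Matrix.conjTranspose_eq_transpose_of_trivial A).symm
  set B : Matrix (Fin n) (Fin n) ℝ := A * Sig * Aᵀ with hB
  have hBpsd : B.PosSemidef := by
    rw [hB, hAT]
    exact hSig.posSemidef.mul_mul_conjTranspose_same A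
  -- quadratic form of B
  have hquadB : ∀ y : Fin n → ℝ, y ⬝ᵥ B *ᵥ y = (Aᵀ *ᵥ y) ⬝ᵥ Sig *ᵥ (Aᵀ *ᵥ y) := by
    intro y
    rw [hB, mul_assoc]
    rw [← Matrix.mulVec_mulVec, ← Matrix.mulVec_mulVec]
    rw [Matrix.dotProduct_mulVec y A, ← Matrix.mulVec_transpose]
  have hquadB_ub : ∀ y : Fin n → ℝ, y ⬝ᵥ B *ᵥ y ≤ abar ^ 2 * sigbar * (y ⬝ᵥ y) := by
    intro y
    rw [hquadB]
    have h1 : (Aᵀ *ᵥ y) ⬝ᵥ Sig *ᵥ (Aᵀ *ᵥ y)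
        ≤ sigbar * ((Aᵀ *ᵥ y) ⬝ᵥ (Aᵀ *ᵥ y)) := by
      have := quad_mono hSub (Aᵀ *ᵥ y)
      rwa [quad_smul_one] at this
    have hATn : ‖Aᵀ‖ ≤ abar := by rw [hAT, Matrix.l2_opNorm_conjTranspose]; exact hAn
    have h2 := mulVec_sq_norm_le hATn y
    nlinarith [quad_nonneg hSig.posSemidef (Aᵀ *ᵥ y)]
  -- A and Aᵀ invertibility facts
  have hdetA : IsUnit A.det := (Matrix.isUnit_iff_isUnit_det _).mp hA
  have hdetAT : IsUnit Aᵀ.det := by rwa [Matrix.det_transpose]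
  have hAinvA : A⁻¹ * A = 1 := Matrix.nonsing_inv_mul _ hdetA
  have hATinv : Aᵀ * (Aᵀ)⁻¹ = 1 := Matrix.mul_nonsing_inv _ hdetAT
  -- B is positive definite
  have hBpd : B.PosDef := by
    refine Matrix.PosDef.of_dotProduct_mulVec_pos hBpsd.isHermitian (fun y hy => ?_)
    have hATy : Aᵀ *ᵥ y ≠ 0 := by
      intro hzero
      apply hy
      have : ((Aᵀ)⁻¹ * Aᵀ) *ᵥ y = 0 := by
        rw [← Matrix.mulVec_mulVec, hzero, Matrix.mulVec_zero]
      rwa [Matrix.nonsing_inv_mul _ hdetAT, Matrix.one_mulVec] at this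
    have := hSig.dotProduct_mulVec_pos hATy
    simp only [star_trivial] at this ⊢
    rw [hquadB y]
    simpa using this
  -- Sig' dominates (1+δ) • B
  have hdom : (Sig' - ((1 + δ) • B)).PosSemidef := by
    have hhermB : ((1 + δ) • B).IsHermitian := by
      unfold Matrix.IsHermitian
      rw [Matrix.conjTranspose_smul, hBpsd.isHermitian.eq]
      simp
    have hherm : (Sig' - ((1 + δ) • B)).IsHermitian := hSig'.isHermitian.sub hhermB
    refine Matrix.PosSemidef.of_dotProduct_mulVec_nonneg hherm (fun y => ?_)
    simp only [star_trivial]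
    have hexp : y ⬝ᵥ (Sig' - (1 + δ) • B) *ᵥ y
        = y ⬝ᵥ Qhat *ᵥ y - δ * (y ⬝ᵥ B *ᵥ y) := by
      rw [hrec]
      simp only [Matrix.sub_mulVec, Matrix.add_mulVec, dotProduct_sub, dotProduct_add,
        Matrix.smul_mulVec, dotProduct_smul, smul_eq_mul]
      ring
    rw [hexp]
    have hQ : qhat * (y ⬝ᵥ y) ≤ y ⬝ᵥ Qhat *ᵥ y := by
      have := quad_mono hQlb y
      rwa [quad_smul_one] at this
    have hBu := hquadB_ub y
    have hδB : δ * (y ⬝ᵥ B *ᵥ y) ≤ qhat * (y ⬝ᵥ y) := by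
      have h := mul_le_mul_of_nonneg_left hBu hδpos.le
      have : δ * (abar ^ 2 * sigbar * (y ⬝ᵥ y)) = qhat * (y ⬝ᵥ y) := by
        rw [hδ]
        field_simp
      linarith
    linarith
  -- apply inverse monotonicity
  have h1δB : ((1 + δ) • B).PosDef := smul_posdef (by linarith) hBpd
  have hmain := quad_inv_mono h1δB hSig' hdom (A *ᵥ x)
  have hBinv : ((1 + δ) • B)⁻¹ = (1 + δ)⁻¹ • B⁻¹ :=
    smul_inv_eq (by positivity) ((Matrix.isUnit_iff_isUnit_det _).mpr
      (isUnit_iff_ne_zero.mpr hBpd.det_pos.ne'))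
  rw [hBinv] at hmain
  have hquadfinal : (A *ᵥ x) ⬝ᵥ ((1 + δ)⁻¹ • B⁻¹) *ᵥ (A *ᵥ x)
      = (1 + δ)⁻¹ * (x ⬝ᵥ Sig⁻¹ *ᵥ x) := by
    rw [Matrix.smul_mulVec, dotProduct_smul, smul_eq_mul]
    congr 1
    have hBinv2 : B⁻¹ = (Aᵀ)⁻¹ * Sig⁻¹ * A⁻¹ := by
      rw [hB, Matrix.mul_inv_rev, Matrix.mul_inv_rev, mul_assoc]
    rw [hBinv2]
    have hmv : ((Aᵀ)⁻¹ * Sig⁻¹ * A⁻¹) *ᵥ (A *ᵥ x) = ((Aᵀ)⁻¹ * Sig⁻¹) *ᵥ x := by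
      rw [Matrix.mulVec_mulVec, mul_assoc ((Aᵀ)⁻¹ * Sig⁻¹) A⁻¹ A, hAinvA, mul_one]
    rw [hmv, mulVec_dot_mulVec, ← mul_assoc, hATinv, one_mul]
  rw [hquadfinal] at hmain
  exact hmain

section Meas
variable {Ω : Type*} {m' : MeasurableSpace Ω}

lemma measurable_matrix_det {S : Ω → Matrix (Fin n) (Fin n) ℝ}
    (h : ∀ i j, Measurable[m'] fun ω => S ω i j) :
    Measurable[m'] fun ω => (S ω).det := by
  simp_rw [Matrix.det_apply']
  exact Finset.measurable_sum _ fun σ _ =>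
    (Finset.measurable_prod _ fun i _ => h (σ i) i).const_mul _

lemma measurable_matrix_inv {S : Ω → Matrix (Fin n) (Fin n) ℝ}
    (h : ∀ i j, Measurable[m'] fun ω => S ω i j) (i j : Fin n) :
    Measurable[m'] fun ω => (S ω)⁻¹ i j := by
  simp_rw [Matrix.inv_def, Matrix.smul_apply, Ring.inverse_eq_inv', smul_eq_mul]
  apply Measurable.mul
  · exact (measurable_matrix_det h).inv
  · simp_rw [Matrix.adjugate_apply]
    apply measurable_matrix_det
    intro a b
    simp_rw [Matrix.updateRow_apply]
    by_cases hab : a = j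
    · simp [hab]
    · simp only [hab, if_false]
      exact h a b

end Meas



set_option maxHeartbeats 2000000

/-- **One-step stochastic Lyapunov estimate.**
On a filtered probability space, let `x̃` (here `xt`), `A`, `Σ` (`Sig`), `Σ'` (`Sig'`), `Q̂`
be `𝔉 k`-measurable, let `e` be independent of `𝔉 k` with zero mean and covariance `⪯ c̄•I`,
and suppose `x̃' = A x̃ + e` and `Σ' = A Σ Aᵀ + Q̂` with `Q̂ ⪰ q̂•I`, `q̂ > 0`, where almost surely
`A` is invertible, `‖A‖ ≤ ā` and `Σ ⪯ σ̄•I`. Then almost surely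
`E[(x̃')ᵀ(Σ')⁻¹ x̃' | 𝔉 k] ≤ (1 + q̂/(ā²σ̄))⁻¹ x̃ᵀ Σ⁻¹ x̃ + c̄ n / q̂`. -/
theorem one_step_lyapunov_estimate {Ω : Type*} {mΩ : MeasurableSpace Ω}
    (P : Measure Ω) [IsProbabilityMeasure P]
    (F : Filtration ℕ mΩ) (k : ℕ) {n : ℕ} (hn : 0 < n)
    (xt xt' : Ω → Fin n → ℝ) (A : Ω → Matrix (Fin n) (Fin n) ℝ)
    (e : Ω → Fin n → ℝ)
    (Sig Sig' Qhat : Ω → Matrix (Fin n) (Fin n) ℝ)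
    (cbar qhat abar sigbar : ℝ) (hcbar : 0 ≤ cbar) (hqhat : 0 < qhat)
    (hxt_meas : Measurable[F k] xt)
    (hA_meas : ∀ i j, Measurable[F k] (fun ω => A ω i j))
    (hSig_meas : ∀ i j, Measurable[F k] (fun ω => Sig ω i j))
    (hSig'_meas : ∀ i j, Measurable[F k] (fun ω => Sig' ω i j))
    (hQhat_meas : ∀ i j, Measurable[F k] (fun ω => Qhat ω i j))
    (he_meas : Measurable e)
    (he_indep : Indep (MeasurableSpace.comap e inferInstance) (F k) P)
    (he_mean : ∀ i, ∫ ω, e ω i ∂P = 0)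
    (he_int : ∀ i j, Integrable (fun ω => e ω i * e ω j) P)
    (he_cov : ((cbar • (1 : Matrix (Fin n) (Fin n) ℝ)) -
        Matrix.of (fun i j => ∫ ω, e ω i * e ω j ∂P)).PosSemidef)
    (hSig_pd : ∀ ω, (Sig ω).PosDef) (hSig'_pd : ∀ ω, (Sig' ω).PosDef)
    (hQhat_symm : ∀ ω, (Qhat ω).IsHermitian)
    (hQhat_lb : ∀ ω, (Qhat ω - (qhat • (1 : Matrix (Fin n) (Fin n) ℝ))).PosSemidef)
    (hstep : ∀ ω, xt' ω = (A ω) *ᵥ (xt ω) + e ω)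
    (hrec : ∀ ω, Sig' ω = A ω * Sig ω * (A ω)ᵀ + Qhat ω)
    (hA_as : ∀ᵐ ω ∂P, IsUnit (A ω) ∧ ‖A ω‖ ≤ abar ∧
        ((sigbar • (1 : Matrix (Fin n) (Fin n) ℝ)) - Sig ω).PosSemidef) :
    ∀ᵐ ω ∂P,
      (P[fun ω' => xt' ω' ⬝ᵥ ((Sig' ω')⁻¹ *ᵥ xt' ω') | F k]) ω ≤
        (1 + qhat / (abar ^ 2 * sigbar))⁻¹ * (xt ω ⬝ᵥ ((Sig ω)⁻¹ *ᵥ xt ω)) +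
          cbar * n / qhat := by

  have hm : F k ≤ mΩ := F.le k
  haveI : SigmaFinite (P.trim hm) := by infer_instance
  -- positivity of abar and sigbar
  have i0 : Fin n := ⟨0, hn⟩
  haveI : Nonempty (Fin n) := ⟨i0⟩
  obtain ⟨ω₀, hω₀⟩ := hA_as.exists
  have habar : 0 < abar := by
    refine lt_of_lt_of_le ?_ hω₀.2.1
    rw [norm_pos_iff]
    intro hA0
    rw [hA0] at hω₀
    exact one_ne_zero ((isUnit_zero_iff.mp hω₀.1)).symm
  have hsigbar : 0 < sigbar := by
    have hx : (Pi.single i0 1 : Fin n → ℝ) ≠ 0 := by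
      intro h
      have := congrFun h i0
      simp at this
    have h1 := quad_mono hω₀.2.2 (Pi.single i0 1)
    rw [quad_smul_one] at h1
    have h2 : (0:ℝ) < Pi.single i0 1 ⬝ᵥ Sig ω₀ *ᵥ Pi.single i0 1 := by
      have := (hSig_pd ω₀).dotProduct_mulVec_pos hx
      simpa using this
    have h3 : (Pi.single i0 1 : Fin n → ℝ) ⬝ᵥ Pi.single i0 1 = 1 := by
      simp [dotProduct_single]
    rw [h3, mul_one] at h1
    linarith
  have hcpos : 0 < (1 + qhat / (abar ^ 2 * sigbar))⁻¹ := by positivity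
  -- RHS is nonneg
  have hRHS_nonneg : ∀ ω, 0 ≤ (1 + qhat / (abar ^ 2 * sigbar))⁻¹ *
      (xt ω ⬝ᵥ ((Sig ω)⁻¹ *ᵥ xt ω)) + cbar * n / qhat := by
    intro ω
    have h1 := quad_nonneg (hSig_pd ω).inv.posSemidef (xt ω)
    have h2 : 0 ≤ cbar * n / qhat := by positivity
    nlinarith
  set f : Ω → ℝ := fun ω' => xt' ω' ⬝ᵥ ((Sig' ω')⁻¹ *ᵥ xt' ω') with hf_def
  by_cases hf_int : Integrable f P
  swap
  · rw [condExp_of_not_integrable hf_int]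
    filter_upwards [] with ω
    simpa using hRHS_nonneg ω
  -- notation
  set u : Ω → Fin n → ℝ := fun ω => A ω *ᵥ xt ω with hu_def
  set Minv : Ω → Matrix (Fin n) (Fin n) ℝ := fun ω => (Sig' ω)⁻¹ with hMinv_def
  set g : Ω → ℝ := fun ω => u ω ⬝ᵥ Minv ω *ᵥ u ω with hg_def
  set C : Matrix (Fin n) (Fin n) ℝ := Matrix.of (fun i j => ∫ ω, e ω i * e ω j ∂P) with hC_def
  set T : Ω → ℝ := fun ω => ∑ i, ∑ j, Minv ω i j * C i j with hT_def
  -- Sig' ⪰ qhat I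
  have hSig'_lb : ∀ ω, (Sig' ω - qhat • (1:Matrix (Fin n) (Fin n) ℝ)).PosSemidef := by
    intro ω
    have hAA : (A ω * Sig ω * (A ω)ᵀ).PosSemidef := by
      rw [← Matrix.conjTranspose_eq_transpose_of_trivial]
      exact (hSig_pd ω).posSemidef.mul_mul_conjTranspose_same (A ω)
    have heq : Sig' ω - qhat • 1 = (A ω * Sig ω * (A ω)ᵀ) + (Qhat ω - qhat • 1) := by
      rw [hrec ω]; abel
    rw [heq]
    exact hAA.add (hQhat_lb ω)
  have hT_bound : ∀ ω, T ω ≤ cbar * n / qhat := fun ω =>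
    trace_term_bound hcbar hqhat (hSig'_pd ω) (hSig'_lb ω) he_cov
  -- a.e. bound for g
  have hg_bound : ∀ᵐ ω ∂P, g ω ≤ (1 + qhat / (abar ^ 2 * sigbar))⁻¹ *
      (xt ω ⬝ᵥ ((Sig ω)⁻¹ *ᵥ xt ω)) := by
    filter_upwards [hA_as] with ω hω
    exact main_quad_bound hqhat habar hsigbar (hSig_pd ω) (hSig'_pd ω) (hrec ω)
      (hQhat_lb ω) hω.1 hω.2.1 hω.2.2 (xt ω)
  -- measurability
  have hxt_i : ∀ i, Measurable[F k] fun ω => xt ω i := fun i =>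
    (measurable_pi_apply i).comp hxt_meas
  have hu_meas : ∀ i, Measurable[F k] fun ω => u ω i := by
    intro i
    simp only [hu_def, Matrix.mulVec, dotProduct]
    exact Finset.measurable_sum _ fun j _ => (hA_meas i j).mul (hxt_i j)
  have hM_meas : ∀ i j, Measurable[F k] fun ω => Minv ω i j := fun i j =>
    measurable_matrix_inv hSig'_meas i j
  have hg_meas : Measurable[F k] g := by
    simp only [hg_def, dotProduct, Matrix.mulVec]
    apply Finset.measurable_sum
    intro i _
    exact (hu_meas i).mul (Finset.measurable_sum _ fun j _ => (hM_meas i j).mul (hu_meas j))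
  -- e side facts
  have he_i : ∀ i, Measurable fun ω => e ω i := fun i => (measurable_pi_apply i).comp he_meas
  have he_i_int : ∀ i, Integrable (fun ω => e ω i) P := by
    intro i
    refine Integrable.mono' ((he_int i i).add (integrable_const 1))
      (he_i i).aestronglyMeasurable (ae_of_all _ fun ω => ?_)
    show ‖e ω i‖ ≤ e ω i * e ω i + 1
    have h1 := abs_mul_abs_self (e ω i)
    have h2 := sq_nonneg (|e ω i| - 1)
    rw [Real.norm_eq_abs]
    nlinarith
  have hcomap_le : MeasurableSpace.comap e inferInstance ≤ mΩ := he_meas.comap_le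
  have he_comap : Measurable[MeasurableSpace.comap e inferInstance] e :=
    Measurable.of_comap_le le_rfl
  have hce : ∀ i, P[(fun ω => e ω i)|F k] =ᵐ[P] fun _ => (0:ℝ) := by
    intro i
    have h := condExp_indep_eq hcomap_le hm
      ((measurable_pi_apply i).comp he_comap).stronglyMeasurable he_indep
    refine h.trans (Filter.EventuallyEq.of_eq ?_)
    funext x
    show (∫ ω, e ω i ∂P) = 0
    exact he_mean i
  have hcee : ∀ i j, P[(fun ω => e ω i * e ω j)|F k] =ᵐ[P] fun _ => C i j := by
    intro i j
    have h := condExp_indep_eq hcomap_le hm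
      (((measurable_pi_apply i).comp he_comap).mul
        ((measurable_pi_apply j).comp he_comap)).stronglyMeasurable he_indep
    exact h
  -- localization sets
  set s : ℕ → Set Ω := fun N =>
    {ω | (∀ i, |u ω i| ≤ (N:ℝ)) ∧ ∀ i j, |Minv ω i j| ≤ (N:ℝ)} with hs_def
  have hs_meas : ∀ N, MeasurableSet[F k] (s N) := by
    intro N
    have h1 : MeasurableSet[F k] {ω | ∀ i, |u ω i| ≤ (N:ℝ)} := by
      rw [Set.setOf_forall]
      exact MeasurableSet.iInter fun i => (continuous_abs.measurable.comp (hu_meas i)) measurableSet_Iic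
    have h2 : MeasurableSet[F k] {ω | ∀ i j, |Minv ω i j| ≤ (N:ℝ)} := by
      rw [Set.setOf_forall]
      refine MeasurableSet.iInter fun i => ?_
      rw [Set.setOf_forall]
      exact MeasurableSet.iInter fun j => (continuous_abs.measurable.comp (hM_meas i j)) measurableSet_Iic
    exact h1.inter h2
  have hcover : ∀ ω, ∃ N : ℕ, ω ∈ s N := by
    intro ω
    obtain ⟨N, hN⟩ := exists_nat_ge ((∑ i, |u ω i|) + ∑ i, ∑ j, |Minv ω i j|)
    refine ⟨N, ⟨fun i => ?_, fun i j => ?_⟩⟩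
    · have h1 : |u ω i| ≤ ∑ i', |u ω i'| :=
        Finset.single_le_sum (f := fun i' => |u ω i'|) (fun _ _ => abs_nonneg _) (Finset.mem_univ i)
      have h2 : (0:ℝ) ≤ ∑ i', ∑ j', |Minv ω i' j'| := by positivity
      linarith
    · have h1 : |Minv ω i j| ≤ ∑ j', |Minv ω i j'| :=
        Finset.single_le_sum (f := fun j' => |Minv ω i j'|) (fun _ _ => abs_nonneg _) (Finset.mem_univ j)
      have h2 : (∑ j', |Minv ω i j'|) ≤ ∑ i', ∑ j', |Minv ω i' j'| :=
        Finset.single_le_sum (f := fun i' => ∑ j', |Minv ω i' j'|)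
          (fun i' _ => Finset.sum_nonneg fun _ _ => abs_nonneg _) (Finset.mem_univ i)
      have h3 : (0:ℝ) ≤ ∑ i', |u ω i'| := by positivity
      linarith
  have hclaimN : ∀ N : ℕ, ∀ᵐ ω ∂P, ω ∈ s N → (P[f|F k]) ω = g ω + T ω := by
    intro N
    have hNnn : (0:ℝ) ≤ (N:ℝ) := Nat.cast_nonneg N
    set a1 : Fin n × Fin n → Ω → ℝ :=
      fun p => (s N).indicator (fun ω => u ω p.1 * Minv ω p.1 p.2) with ha1
    set a2 : Fin n × Fin n → Ω → ℝ :=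
      fun p => (s N).indicator (fun ω => Minv ω p.1 p.2 * u ω p.2) with ha2
    set a3 : Fin n × Fin n → Ω → ℝ :=
      fun p => (s N).indicator (fun ω => Minv ω p.1 p.2) with ha3
    set G : Ω → ℝ := (s N).indicator g with hG
    set ψ : Fin n × Fin n → Ω → ℝ := fun p =>
      a1 p * (fun ω => e ω p.2) + a2 p * (fun ω => e ω p.1)
        + a3 p * (fun ω => e ω p.1 * e ω p.2) with hψ
    -- measurability of coefficients
    have ha1_meas : ∀ p, Measurable[F k] (a1 p) := fun p =>
      ((hu_meas p.1).mul (hM_meas p.1 p.2)).indicator (hs_meas N)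
    have ha2_meas : ∀ p, Measurable[F k] (a2 p) := fun p =>
      ((hM_meas p.1 p.2).mul (hu_meas p.2)).indicator (hs_meas N)
    have ha3_meas : ∀ p, Measurable[F k] (a3 p) := fun p =>
      (hM_meas p.1 p.2).indicator (hs_meas N)
    have hG_meas : Measurable[F k] G := hg_meas.indicator (hs_meas N)
    -- bounds on coefficients
    have ha1_bdd : ∀ p ω, ‖a1 p ω‖ ≤ (N:ℝ) * N := by
      intro p ω
      by_cases hω : ω ∈ s N
      · rw [ha1]
        simp only [Set.indicator_of_mem hω, Real.norm_eq_abs, abs_mul]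
        exact mul_le_mul (hω.1 p.1) (hω.2 p.1 p.2) (abs_nonneg _) hNnn
      · rw [ha1]
        simp only [Set.indicator_of_notMem hω, norm_zero]
        positivity
    have ha2_bdd : ∀ p ω, ‖a2 p ω‖ ≤ (N:ℝ) * N := by
      intro p ω
      by_cases hω : ω ∈ s N
      · rw [ha2]
        simp only [Set.indicator_of_mem hω, Real.norm_eq_abs, abs_mul]
        exact mul_le_mul (hω.2 p.1 p.2) (hω.1 p.2) (abs_nonneg _) hNnn
      · rw [ha2]
        simp only [Set.indicator_of_notMem hω, norm_zero]
        positivity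
    have ha3_bdd : ∀ p ω, ‖a3 p ω‖ ≤ (N:ℝ) := by
      intro p ω
      by_cases hω : ω ∈ s N
      · rw [ha3]
        simp only [Set.indicator_of_mem hω, Real.norm_eq_abs]
        exact hω.2 p.1 p.2
      · rw [ha3]
        simp only [Set.indicator_of_notMem hω, norm_zero]
        exact hNnn
    have hG_bdd : ∀ ω, ‖G ω‖ ≤ (n:ℝ)^2 * (N:ℝ)^3 := by
      intro ω
      by_cases hω : ω ∈ s N
      · rw [hG]
        simp only [Set.indicator_of_mem hω, Real.norm_eq_abs]
        have hgω : g ω = ∑ i, ∑ j, u ω i * (Minv ω i j * u ω j) := by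
          simp [hg_def, dotProduct, Matrix.mulVec, Finset.mul_sum]
        rw [hgω]
        refine le_trans (Finset.abs_sum_le_sum_abs _ _) ?_
        refine le_trans (Finset.sum_le_sum fun i (_ : i ∈ Finset.univ) =>
          Finset.abs_sum_le_sum_abs _ _) ?_
        have hbd : ∀ i j : Fin n, |u ω i * (Minv ω i j * u ω j)| ≤ (N:ℝ)^3 := by
          intro i j
          rw [abs_mul, abs_mul]
          calc |u ω i| * (|Minv ω i j| * |u ω j|)
              ≤ (N:ℝ) * ((N:ℝ) * (N:ℝ)) := by
                refine mul_le_mul (hω.1 i) ?_ (by positivity) hNnn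
                exact mul_le_mul (hω.2 i j) (hω.1 j) (abs_nonneg _) hNnn
            _ = (N:ℝ)^3 := by ring
        refine le_trans (Finset.sum_le_sum fun i (_ : i ∈ Finset.univ) =>
          Finset.sum_le_sum fun j (_ : j ∈ Finset.univ) => hbd i j) ?_
        simp [Finset.sum_const, Finset.card_univ]
        ring_nf
        exact le_refl _
      · rw [hG]
        simp only [Set.indicator_of_notMem hω, norm_zero]
        positivity
    -- integrability
    have hG_int : Integrable G P :=
      Integrable.mono' (integrable_const ((n:ℝ)^2 * (N:ℝ)^3))
        ((hG_meas.mono hm le_rfl).aestronglyMeasurable) (ae_of_all _ hG_bdd)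
    have hψ1_int : ∀ p, Integrable (a1 p * fun ω => e ω p.2) P := fun p =>
      (he_i_int p.2).bdd_mul ((ha1_meas p).mono hm le_rfl).aestronglyMeasurable
        (ae_of_all _ (ha1_bdd p))
    have hψ2_int : ∀ p, Integrable (a2 p * fun ω => e ω p.1) P := fun p =>
      (he_i_int p.1).bdd_mul ((ha2_meas p).mono hm le_rfl).aestronglyMeasurable
        (ae_of_all _ (ha2_bdd p))
    have hψ3_int : ∀ p, Integrable (a3 p * fun ω => e ω p.1 * e ω p.2) P := fun p =>
      (he_int p.1 p.2).bdd_mul ((ha3_meas p).mono hm le_rfl).aestronglyMeasurable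
        (ae_of_all _ (ha3_bdd p))
    have hψ_int : ∀ p : Fin n × Fin n, Integrable (ψ p) P := by
      intro p
      rw [hψ]
      exact ((hψ1_int p).add (hψ2_int p)).add (hψ3_int p)
    -- splitting identity
    have hsplit : (s N).indicator f = G + ∑ p : Fin n × Fin n, ψ p := by
      funext ω
      rw [Pi.add_apply, Finset.sum_apply]
      by_cases hω : ω ∈ s N
      · rw [Set.indicator_of_mem hω]
        have hψω : ∀ p : Fin n × Fin n, ψ p ω =
            u ω p.1 * Minv ω p.1 p.2 * e ω p.2 + Minv ω p.1 p.2 * u ω p.2 * e ω p.1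
              + Minv ω p.1 p.2 * (e ω p.1 * e ω p.2) := by
          intro p
          rw [hψ]
          simp only [Pi.add_apply, Pi.mul_apply, ha1, ha2, ha3,
            Set.indicator_of_mem hω]
        rw [Finset.sum_congr rfl fun p _ => hψω p]
        have hx' : xt' ω = u ω + e ω := by
          rw [hstep ω]
        have hfω : f ω = (u ω + e ω) ⬝ᵥ Minv ω *ᵥ (u ω + e ω) := by
          rw [hf_def]
          simp only [hMinv_def]
          rw [hx']
        have hGω : G ω = g ω := by rw [hG]; exact Set.indicator_of_mem hω _
        rw [hfω, hGω]
        have e1 : u ω ⬝ᵥ Minv ω *ᵥ e ω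
            = ∑ p : Fin n × Fin n, u ω p.1 * Minv ω p.1 p.2 * e ω p.2 := by
          rw [Fintype.sum_prod_type]
          simp only [dotProduct, Matrix.mulVec, Finset.mul_sum]
          exact Finset.sum_congr rfl fun i _ => Finset.sum_congr rfl fun j _ => by ring
        have e2 : e ω ⬝ᵥ Minv ω *ᵥ u ω
            = ∑ p : Fin n × Fin n, Minv ω p.1 p.2 * u ω p.2 * e ω p.1 := by
          rw [Fintype.sum_prod_type]
          simp only [dotProduct, Matrix.mulVec, Finset.mul_sum]
          exact Finset.sum_congr rfl fun i _ => Finset.sum_congr rfl fun j _ => by ring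
        have e3 : e ω ⬝ᵥ Minv ω *ᵥ e ω
            = ∑ p : Fin n × Fin n, Minv ω p.1 p.2 * (e ω p.1 * e ω p.2) := by
          rw [Fintype.sum_prod_type]
          simp only [dotProduct, Matrix.mulVec, Finset.mul_sum]
          exact Finset.sum_congr rfl fun i _ => Finset.sum_congr rfl fun j _ => by ring
        have hguu : u ω ⬝ᵥ Minv ω *ᵥ u ω = g ω := by rw [hg_def]
        simp only [Matrix.mulVec_add, dotProduct_add, add_dotProduct]
        rw [e1, e2, e3, hguu, Finset.sum_add_distrib, Finset.sum_add_distrib]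
        ring
      · rw [Set.indicator_of_notMem hω]
        have hGω : G ω = 0 := by rw [hG]; exact Set.indicator_of_notMem hω _
        have hψω : ∀ p : Fin n × Fin n, ψ p ω = 0 := by
          intro p
          rw [hψ]
          simp [ha1, ha2, ha3, Set.indicator_of_notMem hω]
        rw [hGω, Finset.sum_congr rfl fun p _ => hψω p]
        simp
    -- conditional expectation of the indicator version
    have hce1 : P[(s N).indicator f|F k]
        =ᵐ[P] P[G|F k] + P[∑ p : Fin n × Fin n, ψ p|F k] := by
      rw [hsplit]
      exact condExp_add hG_int (integrable_finset_sum' _ fun p _ => hψ_int p) (F k)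
    have hce2 : P[G|F k] =ᵐ[P] G :=
      Filter.EventuallyEq.of_eq
        (condExp_of_stronglyMeasurable hm hG_meas.stronglyMeasurable hG_int)
    have hce3 : P[∑ p : Fin n × Fin n, ψ p|F k]
        =ᵐ[P] ∑ p : Fin n × Fin n, P[ψ p|F k] :=
      condExp_finsetSum (fun p _ => hψ_int p) (F k)
    have hce4 : ∀ p : Fin n × Fin n,
        P[ψ p|F k] =ᵐ[P] fun ω => a3 p ω * C p.1 p.2 := by
      intro p
      have hadd : P[ψ p|F k] =ᵐ[P]
          P[a1 p * fun ω => e ω p.2|F k] + P[a2 p * fun ω => e ω p.1|F k]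
            + P[a3 p * fun ω => e ω p.1 * e ω p.2|F k] := by
        rw [hψ]
        exact (condExp_add ((hψ1_int p).add (hψ2_int p)) (hψ3_int p) (F k)).trans
          ((condExp_add (hψ1_int p) (hψ2_int p) (F k)).add Filter.EventuallyEq.rfl)
      have hmul1 : P[a1 p * fun ω => e ω p.2|F k]
          =ᵐ[P] a1 p * P[fun ω => e ω p.2|F k] :=
        condExp_mul_of_stronglyMeasurable_left (ha1_meas p).stronglyMeasurable
          (hψ1_int p) (he_i_int p.2)
      have hmul2 : P[a2 p * fun ω => e ω p.1|F k]
          =ᵐ[P] a2 p * P[fun ω => e ω p.1|F k] :=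
        condExp_mul_of_stronglyMeasurable_left (ha2_meas p).stronglyMeasurable
          (hψ2_int p) (he_i_int p.1)
      have hmul3 : P[a3 p * fun ω => e ω p.1 * e ω p.2|F k]
          =ᵐ[P] a3 p * P[fun ω => e ω p.1 * e ω p.2|F k] :=
        condExp_mul_of_stronglyMeasurable_left (ha3_meas p).stronglyMeasurable
          (hψ3_int p) (he_int p.1 p.2)
      have z1 : P[a1 p * fun ω => e ω p.2|F k] =ᵐ[P] fun _ => (0:ℝ) :=
        hmul1.trans (by filter_upwards [hce p.2] with ω hω; simp [hω])
      have z2 : P[a2 p * fun ω => e ω p.1|F k] =ᵐ[P] fun _ => (0:ℝ) :=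
        hmul2.trans (by filter_upwards [hce p.1] with ω hω; simp [hω])
      have z3 : P[a3 p * fun ω => e ω p.1 * e ω p.2|F k]
          =ᵐ[P] fun ω => a3 p ω * C p.1 p.2 :=
        hmul3.trans (by filter_upwards [hcee p.1 p.2] with ω hω; simp [hω])
      filter_upwards [hadd, z1, z2, z3] with ω h0 h1 h2 h3
      rw [h0, Pi.add_apply, Pi.add_apply, h1, h2, h3]
      ring
    have hce4all : ∀ᵐ ω ∂P, ∀ p : Fin n × Fin n,
        (P[ψ p|F k]) ω = a3 p ω * C p.1 p.2 := ae_all_iff.mpr fun p => hce4 p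
    have hind := condExp_indicator hf_int (hs_meas N)
    filter_upwards [hce1, hce2, hce3, hce4all, hind] with ω k1 k2 k3 k4 k5
    intro hmem
    have hL : (s N).indicator (P[f|F k]) ω = (P[f|F k]) ω :=
      Set.indicator_of_mem hmem _
    have hsum : (∑ p : Fin n × Fin n, P[ψ p|F k]) ω
        = ∑ p : Fin n × Fin n, a3 p ω * C p.1 p.2 := by
      rw [Finset.sum_apply]
      exact Finset.sum_congr rfl fun p _ => k4 p
    have hkey : (P[f|F k]) ω = G ω + ∑ p : Fin n × Fin n, a3 p ω * C p.1 p.2 := by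
      rw [← hL, ← k5, k1, Pi.add_apply, k2, k3, hsum]
    have hGm : G ω = g ω := by rw [hG]; exact Set.indicator_of_mem hmem _
    have hTm : (∑ p : Fin n × Fin n, a3 p ω * C p.1 p.2) = T ω := by
      rw [hT_def]
      simp only [ha3, Set.indicator_of_mem hmem]
      rw [Fintype.sum_prod_type]
    rw [hkey, hGm, hTm]
  have hall := ae_all_iff.mpr hclaimN
  filter_upwards [hall, hg_bound] with ω h1 h2
  obtain ⟨N, hN⟩ := hcover ω
  rw [h1 N hN]
  exact add_le_add h2 (hT_bound ω)
end
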